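/- Let K be an algebraically closed field of characteristic 0 and let n_1,…,n_k, d_1,…,d_k be positive integers. Set r = min_i ⌈(d_i+2)/2⌉ and J = {i : ⌈(d_i+2)/2⌉ = r}, and assume r ≥ 3. Let S be a set of r distinct points of ℙ^{n_1}×⋯×ℙ^{n_k}. Suppose there exists i ∈ J such that for every ℓ ≠ i the ℓ-th components of all points of S are pairwise proportional, while the i-th components of the points of S are NOT collinear (their representative vectors span a subspace of K^{n_i+1} of dimension ≥ 3). Then the double points 2S impose independent conditions in multidegree (d_1,…,d_k). (Equivalently, ν(S) ∉ Ter_r(SV^{d_1,…,d_k}_{n_1×⋯×n_k}).) -/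

import Mathlib

open MvPolynomial

/-- Multihomogeneous polynomials of multidegree `d` in the blocks of variables
`x_{i,0}, …, x_{i,n i}` (`i : Fin k`), all of whose first-order partial derivatives vanish at
every point of the family `p` of points of `ℙ^{n 1} × ⋯ × ℙ^{n k}`. -/
noncomputable def svDblVanish (K : Type) [Field K] (k : ℕ) (n d : Fin k → ℕ) {ι : Type}
    (p : ι → (i : Fin k) → (Fin (n i + 1) → K)) :
    Submodule K (MvPolynomial ((i : Fin k) × Fin (n i + 1)) K) :=
  weightedHomogeneousSubmodule K (fun v => Pi.single v.1 1) d ⊓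
    ⨅ (a : ι) (v : (i : Fin k) × Fin (n i + 1)),
      LinearMap.ker
        ((aeval fun w : (i : Fin k) × Fin (n i + 1) => p a w.1 w.2).toLinearMap
          ∘ₗ (pderiv v).toLinearMap)

namespace SVAux

variable {K : Type} [CommRing K] {k : ℕ} {n : Fin k → ℕ}

abbrev Idx (k : ℕ) (n : Fin k → ℕ) : Type := (i : Fin k) × Fin (n i + 1)

variable (K n) in
noncomputable def lin (ℓ : Fin k) (u : Fin (n ℓ + 1) → K) : MvPolynomial (Idx k n) K :=
  ∑ j, C (u j) * X ⟨ℓ, j⟩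

noncomputable def evalAt (p : (i : Fin k) → Fin (n i + 1) → K) :
    MvPolynomial (Idx k n) K →ₐ[K] K := aeval fun w => p w.1 w.2

@[simp] lemma evalAt_X (p) (v : Idx k n) : evalAt (K := K) p (X v) = p v.1 v.2 := aeval_X _ _

lemma evalAt_lin (p) (ℓ : Fin k) (u : Fin (n ℓ + 1) → K) :
    evalAt p (lin K n ℓ u) = ∑ j, u j * p ℓ j := by
  simp [lin, evalAt]

lemma pderiv_lin_same (ℓ : Fin k) (u : Fin (n ℓ + 1) → K) (j : Fin (n ℓ + 1)) :
    pderiv (⟨ℓ, j⟩ : Idx k n) (lin K n ℓ u) = C (u j) := by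
  classical
  simp only [lin, map_sum, pderiv_C_mul]
  rw [Finset.sum_eq_single j (fun b _ hb => ?_) (by simp)]
  · rw [pderiv_X_self, mul_one]
  · rw [pderiv_X_of_ne, mul_zero]
    exact fun h => hb (by cases h; rfl)

lemma pderiv_lin_ne {ℓ m : Fin k} (hm : m ≠ ℓ) (u : Fin (n ℓ + 1) → K) (j : Fin (n m + 1)) :
    pderiv (⟨m, j⟩ : Idx k n) (lin K n ℓ u) = 0 := by
  classical
  simp only [lin, map_sum, pderiv_C_mul]
  refine Finset.sum_eq_zero fun b _ => ?_
  rw [pderiv_X_of_ne, mul_zero]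
  exact fun h => hm (by cases h; rfl)

end SVAux

namespace Chunk2
open Finsupp
variable {K : Type} [CommRing K] {k : ℕ} {n : Fin k → ℕ}

abbrev wt (k : ℕ) (n : Fin k → ℕ) : SVAux.Idx k n → (Fin k → ℕ) := fun v => Pi.single v.1 1

open SVAux

lemma lin_mem (ℓ : Fin k) (u : Fin (n ℓ + 1) → K) :
    lin K n ℓ u ∈ weightedHomogeneousSubmodule K (wt k n) (Pi.single ℓ 1) := by
  refine Submodule.sum_mem _ fun j _ => ?_
  rw [← MvPolynomial.smul_eq_C_mul]
  exact Submodule.smul_mem _ _ (isWeightedHomogeneous_X K _ _)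

lemma pderiv_mul_zero (v : Idx k n) {f g : MvPolynomial (Idx k n) K}
    (hf : pderiv v f = 0) (hg : pderiv v g = 0) : pderiv v (f * g) = 0 := by
  rw [pderiv_mul, hf, hg]; ring

lemma pderiv_pow_zero (v : Idx k n) {f : MvPolynomial (Idx k n) K} (e : ℕ)
    (hf : pderiv v f = 0) : pderiv v (f ^ e) = 0 := by
  rw [pderiv_pow, hf, mul_zero]

lemma pderiv_prod_zero {ι : Type*} (v : Idx k n) (s : Finset ι)
    (φ : ι → MvPolynomial (Idx k n) K) (h : ∀ e ∈ s, pderiv v (φ e) = 0) :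
    pderiv v (∏ e ∈ s, φ e) = 0 := by
  refine Finset.prod_induction φ (fun x => pderiv v x = 0)
    (fun a b ha hb => pderiv_mul_zero v ha hb) pderiv_one h

lemma sq_kill (p : (i : Fin k) → Fin (n i + 1) → K) {f : MvPolynomial (Idx k n) K}
    (hf : evalAt p f = 0) (h : MvPolynomial (Idx k n) K) :
    evalAt p (f ^ 2 * h) = 0 ∧ ∀ v, evalAt p (pderiv v (f ^ 2 * h)) = 0 := by
  constructor
  · rw [map_mul, map_pow, hf]; ring
  · intro v
    rw [pderiv_mul, pderiv_pow]
    simp [hf]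

lemma X_mul_pderiv_monomial (v : Idx k n) (m : Idx k n →₀ ℕ) (c : K) :
    X v * pderiv v (monomial m c) = m v • monomial m c := by
  rw [pderiv_monomial]
  rcases Nat.eq_zero_or_pos (m v) with h | h
  · simp [h]
  · rw [X, monomial_mul, one_mul, add_tsub_cancel_of_le (single_le_iff.mpr h)]
    rw [smul_monomial, nsmul_eq_mul, mul_comm]

lemma weight_apply_block (m : Idx k n →₀ ℕ) (ℓ : Fin k) :
    Finsupp.weight (wt k n) m ℓ = ∑ j, m ⟨ℓ, j⟩ := by
  classical
  rw [Finsupp.weight_apply, Finsupp.sum_fintype _ _ (fun v => by simp)]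
  rw [Finset.sum_apply, ← Finset.univ_sigma_univ, Finset.sum_sigma]
  rw [Finset.sum_eq_single ℓ (fun b _ hb => ?_) (fun h => absurd (Finset.mem_univ ℓ) h)]
  · exact Finset.sum_congr rfl fun j _ => by simp [wt]
  · exact Finset.sum_eq_zero fun j _ => by simp [wt, Pi.single_eq_of_ne (Ne.symm hb)]

end Chunk2

namespace Chunk3
open SVAux Chunk2
variable {K : Type} [CommRing K] {k : ℕ} {n : Fin k → ℕ}

lemma euler_monomial (ℓ : Fin k) (m : Idx k n →₀ ℕ) (c : K) :
    ∑ j, X (⟨ℓ, j⟩ : Idx k n) * pderiv ⟨ℓ, j⟩ (monomial m c)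
      = (∑ j, m ⟨ℓ, j⟩) • monomial m c := by
  rw [Finset.sum_smul]
  exact Finset.sum_congr rfl fun j _ => X_mul_pderiv_monomial _ _ _

lemma euler {d : Fin k → ℕ} (ℓ : Fin k) {F : MvPolynomial (Idx k n) K}
    (hF : F.IsWeightedHomogeneous (wt k n) d) :
    ∑ j, X (⟨ℓ, j⟩ : Idx k n) * pderiv ⟨ℓ, j⟩ F = d ℓ • F := by
  conv_lhs => rw [F.as_sum]
  simp only [map_sum, Finset.mul_sum]
  rw [Finset.sum_comm]
  have step : ∀ m ∈ F.support,
      ∑ j, X (⟨ℓ, j⟩ : Idx k n) * pderiv ⟨ℓ, j⟩ (monomial m (coeff m F))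
        = d ℓ • monomial m (coeff m F) := by
    intro m hm
    rw [euler_monomial]
    congr 1
    rw [← weight_apply_block m ℓ, hF (mem_support_iff.mp hm)]
  rw [Finset.sum_congr rfl step, ← Finset.smul_sum, ← F.as_sum]

/-- evaluated Euler identity -/
lemma euler_eval {d : Fin k → ℕ} (ℓ : Fin k) {F : MvPolynomial (Idx k n) K}
    (hF : F.IsWeightedHomogeneous (wt k n) d) (p : (i : Fin k) → Fin (n i + 1) → K) :
    ∑ j, p ℓ j * evalAt p (pderiv ⟨ℓ, j⟩ F) = (d ℓ : K) * evalAt p F := by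
  have := congrArg (evalAt p) (euler ℓ hF)
  rw [map_sum] at this
  simp only [map_mul, evalAt_X] at this
  rw [this]
  simp [nsmul_eq_mul]

end Chunk3

namespace Chunk4
open SVAux Chunk2

noncomputable def symEquiv (N D : ℕ) :
    Sym (Fin N) D ≃ {g : Fin N →₀ ℕ // ∑ j, g j = D} :=
  Multiset.toFinsupp.toEquiv.subtypeEquiv fun s => by
    have h1 : ∑ j, Multiset.toFinsupp s j = (Multiset.toFinsupp s).sum (fun _ => id) := by
      rw [Finsupp.sum_fintype _ _ (fun _ => rfl)]; rfl
    show Multiset.card s = D ↔ ∑ j, Multiset.toFinsupp s j = D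
    rw [h1, Multiset.toFinsupp_sum_eq]

lemma card_fg (N D : ℕ) [Fintype {g : Fin N →₀ ℕ // ∑ j, g j = D}] :
    Fintype.card {g : Fin N →₀ ℕ // ∑ j, g j = D} = (N + D - 1).choose D := by
  rw [← Fintype.card_congr (symEquiv N D), Sym.card_sym_eq_choose, Fintype.card_fin]

variable {K : Type} [Field K] {k : ℕ} {n : Fin k → ℕ}

noncomputable def eqA (d : Fin k → ℕ) :
    {m : Idx k n →₀ ℕ | Finsupp.weight (wt k n) m = d} ≃
      Π i, {g : Fin (n i + 1) →₀ ℕ // ∑ j, g j = d i} :=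
  (Finsupp.sigmaFinsuppEquivPiFinsupp.subtypeEquiv fun m => by
    show Finsupp.weight (wt k n) m = d ↔ _
    rw [funext_iff]
    refine forall_congr' fun i => ?_
    rw [weight_apply_block]
    have : ∀ j, Finsupp.sigmaFinsuppEquivPiFinsupp m i j = m ⟨i, j⟩ :=
      fun j => Finsupp.sigmaFinsuppEquivPiFinsupp_apply m i j
    rw [show (∑ j, Finsupp.sigmaFinsuppEquivPiFinsupp m i j) = ∑ j, m ⟨i, j⟩ from
      Finset.sum_congr rfl fun j _ => this j]
    ).trans (Equiv.subtypePiEquivPi)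

end Chunk4

namespace Chunk5
open SVAux Chunk2 Chunk4

variable {K : Type} [Field K] {k : ℕ} {n : Fin k → ℕ}

noncomputable instance instFG (N D : ℕ) : Fintype {g : Fin N →₀ ℕ // ∑ j, g j = D} :=
  Fintype.ofEquiv _ (symEquiv N D)

variable (K n) in
noncomputable def fintypeA (d : Fin k → ℕ) :
    Fintype {m : Idx k n →₀ ℕ | Finsupp.weight (wt k n) m = d} :=
  Fintype.ofEquiv _ (eqA (n := n) d).symm

attribute [local instance] fintypeA

variable (K n) in
noncomputable def VEquiv (d : Fin k → ℕ) :
    weightedHomogeneousSubmodule K (wt k n) d ≃ₗ[K]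
      ({m : Idx k n →₀ ℕ | Finsupp.weight (wt k n) m = d} →₀ K) :=
  (LinearEquiv.ofEq _ _ (weightedHomogeneousSubmodule_eq_finsupp_supported K _ d)).trans
    (AddMonoidAlgebra.supportedEquivFinsupp _)

instance instFinDimV (d : Fin k → ℕ) :
    FiniteDimensional K (weightedHomogeneousSubmodule K (wt k n) d) :=
  Module.Finite.equiv (VEquiv K n d).symm

lemma cardA (d : Fin k → ℕ) :
    Fintype.card {m : Idx k n →₀ ℕ | Finsupp.weight (wt k n) m = d}
      = ∏ i, (n i + d i).choose (n i) := by
  rw [Fintype.card_congr (eqA (n := n) d), Fintype.card_pi]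
  refine Finset.prod_congr rfl fun i _ => ?_
  rw [card_fg]
  have h1 : n i + 1 + d i - 1 = n i + d i := by omega
  rw [h1]
  have h2 := Nat.choose_symm (n := n i + d i) (k := d i) (Nat.le_add_left _ _)
  rw [show n i + d i - d i = n i by omega] at h2
  exact h2.symm

lemma finrank_V (d : Fin k → ℕ) :
    Module.finrank K (weightedHomogeneousSubmodule K (wt k n) d)
      = ∏ i, (n i + d i).choose (n i) := by
  rw [(VEquiv K n d).finrank_eq, Module.finrank_finsupp_self, cardA]

end Chunk5

namespace Chunk6
variable {K : Type} [Field K] {m : ℕ}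

lemma dual_sep {W : Submodule K (Fin m → K)} {x : Fin m → K} (hx : x ∉ W) :
    ∃ u : Fin m → K, (∀ y ∈ W, ∑ j, u j * y j = 0) ∧ ∑ j, u j * x j = 1 := by
  obtain ⟨f, hfx, hfW⟩ := W.exists_dual_map_eq_bot_of_notMem hx inferInstance
  set g := (f x)⁻¹ • f with hg
  have key : ∀ y, g y = ∑ j, g (fun j' => if j = j' then 1 else 0) * y j := by
    intro y
    rw [LinearMap.pi_apply_eq_sum_univ g y]
    exact Finset.sum_congr rfl fun j _ => by rw [smul_eq_mul, mul_comm]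
  refine ⟨fun j => g (fun j' => if j = j' then 1 else 0), fun y hy => ?_, ?_⟩
  · rw [← key y, hg, LinearMap.smul_apply]
    have : f y = 0 := by
      have h2 : f y ∈ W.map f := Submodule.mem_map_of_mem hy
      rw [hfW] at h2
      simpa using h2
    rw [this, smul_zero]
  · rw [← key x, hg, LinearMap.smul_apply, smul_eq_mul, inv_mul_cancel₀ hfx]

lemma sep_of_ne_zero {x : Fin m → K} (hx : x ≠ 0) :
    ∃ u : Fin m → K, ∑ j, u j * x j = 1 := by
  obtain ⟨u, -, hu⟩ := dual_sep (W := ⊥) (by simpa using hx)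
  exact ⟨u, hu⟩

lemma pair_choice {r : ℕ} (hr : 3 ≤ r) (v : Fin r → (Fin m → K))
    (hpair : ∀ a b, a ≠ b → ∀ c : K, v a ≠ c • v b)
    (hspan : 3 ≤ Module.finrank K (Submodule.span K (Set.range v))) (a : Fin r) :
    ∃ b c, b ≠ a ∧ c ≠ a ∧ b ≠ c ∧ v a ∉ Submodule.span K {v b, v c} := by
  classical
  by_contra hcon
  push_neg at hcon
  obtain ⟨b0, hb0⟩ : ∃ b0 : Fin r, b0 ≠ a :=
    Fintype.exists_ne_of_one_lt_card (by rw [Fintype.card_fin]; omega) a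
  have key : ∀ e, v e ∈ Submodule.span K ({v a, v b0} : Set (Fin m → K)) := by
    intro e
    by_cases he : e = a
    · exact he ▸ Submodule.subset_span (by simp)
    by_cases heb : e = b0
    · exact heb ▸ Submodule.subset_span (by simp)
    · have hmem := hcon b0 e hb0 he (fun hh => heb hh.symm)
      rw [Submodule.mem_span_pair] at hmem
      obtain ⟨α, β, hab⟩ := hmem
      have hβ : β ≠ 0 := by
        rintro rfl
        rw [zero_smul, add_zero] at hab
        exact hpair a b0 (Ne.symm hb0) α hab.symm
      rw [Submodule.mem_span_pair]
      refine ⟨β⁻¹, -(β⁻¹ * α), ?_⟩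
      rw [← hab, smul_add, smul_smul, smul_smul, inv_mul_cancel₀ hβ, one_smul, neg_smul]
      abel
  have hle : Submodule.span K (Set.range v) ≤ Submodule.span K ({v a, v b0} : Set (Fin m → K)) :=
    Submodule.span_le.mpr (by rintro _ ⟨e, rfl⟩; exact key e)
  have h2 : Module.finrank K (Submodule.span K ({v a, v b0} : Set (Fin m → K))) ≤ 2 := by
    refine le_trans (finrank_span_le_card _) ?_
    rw [Set.toFinset_insert, Set.toFinset_singleton]
    exact le_trans (Finset.card_insert_le _ _) (by simp)
  have h3 := Submodule.finrank_mono hle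
  omega

end Chunk6

namespace Chunk7
open SVAux Chunk2 Chunk3 Chunk6

variable {K : Type} [Field K] {k : ℕ} {n : Fin k → ℕ}

lemma single_add_single (i : Fin k) (x y : ℕ) :
    (Pi.single i x : Fin k → ℕ) + Pi.single i y = Pi.single i (x + y) := by
  funext j
  by_cases h : j = i
  · subst h; simp
  · simp [Pi.single_eq_of_ne h]

lemma smul_single_nat (i : Fin k) (x e : ℕ) :
    (Pi.single i (e * x) : Fin k → ℕ) = e • (Pi.single i x : Fin k → ℕ) := by
  funext j
  by_cases h : j = i
  · subst h; simp
  · simp [Pi.single_eq_of_ne h]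

lemma isWH_pow {φ : MvPolynomial (Idx k n) K} {i : Fin k} {x : ℕ}
    (h : φ.IsWeightedHomogeneous (wt k n) (Pi.single i x)) (e : ℕ) :
    (φ ^ e).IsWeightedHomogeneous (wt k n) (Pi.single i (e * x)) := by
  have := IsWeightedHomogeneous.prod (Finset.range e) (fun _ => φ)
    (fun _ => (Pi.single i x : Fin k → ℕ)) (fun _ _ => h)
  rw [Finset.prod_const, Finset.sum_const, Finset.card_range] at this
  rwa [smul_single_nat]

lemma lin_isWH (i : Fin k) (u : Fin (n i + 1) → K) :
    (lin K n i u).IsWeightedHomogeneous (wt k n) (Pi.single i 1) :=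
  (mem_weightedHomogeneousSubmodule _ _ _ _).mp (lin_mem i u)

variable {r : ℕ} {S : Fin r → (i : Fin k) → Fin (n i + 1) → K} {i : Fin k}

/-- The bump polynomial: weighted degree `e` concentrated in block `i`, value `1` at `S a`,
vanishing to order `≥ 2` at all other points, only involving block-`i` variables. -/
lemma bump (hr : 3 ≤ r)
    (hS0 : ∀ a, S a i ≠ 0)
    (hpair : ∀ a b : Fin r, a ≠ b → ∀ c : K, S a i ≠ c • S b i)
    (hspan : 3 ≤ Module.finrank K (Submodule.span K (Set.range fun a => S a i)))
    (a : Fin r) (e : ℕ) (he : 2 * r - 4 ≤ e) :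
    ∃ Q : MvPolynomial (Idx k n) K,
      Q.IsWeightedHomogeneous (wt k n) (Pi.single i e) ∧
      evalAt (S a) Q = 1 ∧
      (∀ b, b ≠ a → evalAt (S b) Q = 0 ∧ ∀ v, evalAt (S b) (pderiv v Q) = 0) ∧
      (∀ v : Idx k n, v.1 ≠ i → pderiv v Q = 0) := by
  classical
  set v : Fin r → Fin (n i + 1) → K := fun a => S a i with hv
  obtain ⟨b, c, hba, hca, hbc, hnm⟩ := pair_choice hr v hpair hspan a
  obtain ⟨β, hβW, hβa⟩ := dual_sep (W := Submodule.span K {v b, v c}) hnm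
  have hw : ∀ e' : Fin r, ∃ uu : Fin (n i + 1) → K,
      (e' ≠ a → (∑ j, uu j * v e' j = 0) ∧ ∑ j, uu j * v a j = 1) := by
    intro e'
    by_cases h : e' = a
    · exact ⟨0, fun h' => absurd h h'⟩
    · have hna : v a ∉ Submodule.span K {v e'} := by
        rw [Submodule.mem_span_singleton]
        rintro ⟨cc, hcc⟩
        exact hpair a e' (fun hh => h hh.symm) cc hcc.symm
      obtain ⟨u, hW, ha⟩ := dual_sep hna
      exact ⟨u, fun _ => ⟨hW (v e') (Submodule.mem_span_singleton_self _), ha⟩⟩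
  choose u hu using hw
  obtain ⟨μ, hμ⟩ := sep_of_ne_zero (hS0 a)
  set E : Finset (Fin r) := Finset.univ \ {a, b, c} with hE
  have hcard : E.card = r - 3 := by
    rw [hE, Finset.card_sdiff_of_subset (Finset.subset_univ _), Finset.card_univ, Fintype.card_fin]
    congr 1
    rw [show ({a, b, c} : Finset (Fin r)) = insert a (insert b {c}) from rfl]
    rw [Finset.card_insert_of_notMem (by simp [Ne.symm hba, Ne.symm hca]),
      Finset.card_insert_of_notMem (by simp [hbc]), Finset.card_singleton]
  set m0 : ℕ := e - (2 * r - 4) with hm0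
  set Q : MvPolynomial (Idx k n) K :=
    (lin K n i β) ^ 2 * (∏ e' ∈ E, (lin K n i (u e')) ^ 2) * (lin K n i μ) ^ m0 with hQ
  refine ⟨Q, ?_, ?_, ?_, ?_⟩
  · -- homogeneity
    have h1 := isWH_pow (lin_isWH i β) 2
    have h2 := IsWeightedHomogeneous.prod E (fun e' => (lin K n i (u e')) ^ 2)
      (fun _ => (Pi.single i (2 * 1) : Fin k → ℕ)) (fun e' _ => isWH_pow (lin_isWH i (u e')) 2)
    rw [Finset.sum_const, ← smul_single_nat] at h2
    have h3 := isWH_pow (lin_isWH i μ) m0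
    have htot := (h1.mul h2).mul h3
    rw [single_add_single, single_add_single] at htot
    have harith : 2 * 1 + E.card * (2 * 1) + m0 * 1 = e := by
      rw [hcard]; omega
    rwa [harith] at htot
  · -- value 1 at a
    have hβa' : ∑ j, β j * S a i j = 1 := hβa
    have hμ' : ∑ j, μ j * S a i j = 1 := hμ
    rw [hQ, map_mul, map_mul, map_pow, map_pow, map_prod, evalAt_lin, evalAt_lin, hβa', hμ']
    rw [Finset.prod_congr rfl (fun e' he' => ?_), Finset.prod_const_one]
    · ring
    · have he'a : e' ≠ a := by
        rw [hE] at he'; simp at he'; exact fun hh => he'.1 hh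
      rw [map_pow, evalAt_lin, show (∑ j, u e' j * S a i j) = 1 from (hu e' he'a).2, one_pow]
  · -- vanishing doubly at b' ≠ a
    intro b' hb'a
    by_cases hmem : b' ∈ E
    · have h0 : evalAt (S b') (lin K n i (u b')) = 0 := by
        rw [evalAt_lin]; exact (hu b' hb'a).1
      have hsplit : Q = (lin K n i (u b')) ^ 2 *
          ((lin K n i β) ^ 2 * (∏ e' ∈ E.erase b', (lin K n i (u e')) ^ 2)
            * (lin K n i μ) ^ m0) := by
        rw [hQ, ← Finset.mul_prod_erase E _ hmem]; ring
      obtain ⟨h1, h2⟩ := sq_kill (S b') h0 ((lin K n i β) ^ 2 *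
          (∏ e' ∈ E.erase b', (lin K n i (u e')) ^ 2) * (lin K n i μ) ^ m0)
      rw [hsplit]
      exact ⟨h1, h2⟩
    · have hbc' : b' = b ∨ b' = c := by
        rw [hE] at hmem; simp at hmem
        by_cases hbb : b' = b
        · exact Or.inl hbb
        · exact Or.inr (hmem hb'a hbb)
      have h0 : evalAt (S b') (lin K n i β) = 0 := by
        rw [evalAt_lin]
        rcases hbc' with h | h
        · exact h ▸ hβW _ (Submodule.subset_span (Set.mem_insert _ _))
        · exact h ▸ hβW _ (Submodule.subset_span
            (Set.mem_insert_of_mem _ (Set.mem_singleton _)))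
      have hsplit : Q = (lin K n i β) ^ 2 *
          ((∏ e' ∈ E, (lin K n i (u e')) ^ 2) * (lin K n i μ) ^ m0) := by
        rw [hQ]; ring
      obtain ⟨h1, h2⟩ := sq_kill (S b') h0
        ((∏ e' ∈ E, (lin K n i (u e')) ^ 2) * (lin K n i μ) ^ m0)
      rw [hsplit]
      exact ⟨h1, h2⟩
  · -- block-i only
    rintro ⟨mℓ, j⟩ hne
    apply pderiv_mul_zero
    apply pderiv_mul_zero
    · exact pderiv_pow_zero _ _ (pderiv_lin_ne hne _ _)
    · exact pderiv_prod_zero _ _ _ (fun e' _ => pderiv_pow_zero _ _ (pderiv_lin_ne hne _ _))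
    · exact pderiv_pow_zero _ _ (pderiv_lin_ne hne _ _)

lemma evalAt_C (p : (i : Fin k) → Fin (n i + 1) → K) (x : K) :
    evalAt (n := n) p (MvPolynomial.C x) = x := by
  simp [evalAt]

lemma grad [CharZero K] (hr : 3 ≤ r) {di : ℕ} (hd1 : 1 ≤ di) (hdi : 2 * r - 3 ≤ di)
    (hS0 : ∀ a, S a i ≠ 0)
    (hpair : ∀ a b : Fin r, a ≠ b → ∀ c : K, S a i ≠ c • S b i)
    (hspan : 3 ≤ Module.finrank K (Submodule.span K (Set.range fun a => S a i)))
    (a : Fin r) (t : Fin (n i + 1) → K) :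
    ∃ G : MvPolynomial (Idx k n) K,
      G.IsWeightedHomogeneous (wt k n) (Pi.single i di) ∧
      (∀ b, b ≠ a → ∀ v, evalAt (S b) (pderiv v G) = 0) ∧
      (∀ v : Idx k n, v.1 ≠ i → pderiv v G = 0) ∧
      (∀ j, evalAt (S a) (pderiv ⟨i, j⟩ G) = t j) := by
  obtain ⟨Q, hQH, hQa, hQb, hQblock⟩ := bump hr hS0 hpair hspan a (di - 1) (by omega)
  have hdiK : (di : K) ≠ 0 := Nat.cast_ne_zero.mpr (by omega)
  set u0 : Fin (n i + 1) → K := fun j => evalAt (S a) (pderiv ⟨i, j⟩ Q) with hu0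
  have heuler : ∑ j, S a i j * u0 j = (di : K) - 1 := by
    have h := euler_eval i hQH (S a)
    rw [hQa, mul_one, Pi.single_eq_same] at h
    rw [hu0]
    rw [h, Nat.cast_sub hd1, Nat.cast_one]
  set T : K := ∑ j, t j * S a i j with hT
  set s : K := T / (di : K) with hs
  set w : Fin (n i + 1) → K := fun j => t j - s * u0 j with hw
  refine ⟨Q * lin K n i w, ?_, ?_, ?_, ?_⟩
  · have := hQH.mul (lin_isWH i w)
    rw [single_add_single] at this
    rwa [show di - 1 + 1 = di by omega] at this
  · intro b hb v
    rw [pderiv_mul, map_add, map_mul, map_mul, (hQb b hb).2 v, (hQb b hb).1]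
    ring
  · rintro ⟨mℓ, j⟩ hne
    exact pderiv_mul_zero _ (hQblock _ hne) (pderiv_lin_ne hne _ _)
  · intro j
    rw [pderiv_mul, map_add, map_mul, map_mul, pderiv_lin_same, evalAt_lin, evalAt_C, hQa]
    have hws : ∑ j', w j' * S a i j' = s := by
      rw [hw]
      simp only [sub_mul, Finset.sum_sub_distrib]
      rw [← hT]
      have h2 : ∑ j', s * u0 j' * S a i j' = s * ((di : K) - 1) := by
        rw [← heuler, Finset.mul_sum]
        exact Finset.sum_congr rfl fun j' _ => by ring
      rw [h2, hs]
      field_simp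
      ring
    rw [hws, hw]
    ring

end Chunk7

namespace Chunk8
open SVAux Chunk2 Chunk3 Chunk6 Chunk7

variable {K : Type} [Field K] {k : ℕ} {n d : Fin k → ℕ}

lemma sum_single_erase (d : Fin k → ℕ) (i : Fin k) :
    (∑ ℓ ∈ Finset.univ.erase i, (Pi.single ℓ (d ℓ) : Fin k → ℕ)) + Pi.single i (d i) = d := by
  funext m
  rw [Pi.add_apply, Finset.sum_apply]
  by_cases h : m = i
  · subst h
    simp [Pi.single_apply, Finset.sum_ite_eq]
  · simp [Pi.single_apply, Finset.sum_ite_eq, h]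

lemma deg_split {i ℓ : Fin k} (hℓ : ℓ ≠ i) (hdℓ : 1 ≤ d ℓ) :
    (Pi.single ℓ 1 : Fin k → ℕ) + (Pi.single ℓ (d ℓ - 1) +
      ((∑ m ∈ (Finset.univ.erase i).erase ℓ, (Pi.single m (d m) : Fin k → ℕ)) +
        Pi.single i (d i))) = d := by
  have h1 : (Pi.single ℓ 1 : Fin k → ℕ) + Pi.single ℓ (d ℓ - 1) = Pi.single ℓ (d ℓ) := by
    rw [single_add_single, show 1 + (d ℓ - 1) = d ℓ by omega]
  have h2 : (Pi.single ℓ (d ℓ) : Fin k → ℕ) +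
      (∑ m ∈ (Finset.univ.erase i).erase ℓ, (Pi.single m (d m) : Fin k → ℕ)) =
      ∑ m ∈ Finset.univ.erase i, (Pi.single m (d m) : Fin k → ℕ) :=
    Finset.add_sum_erase _ (fun m => (Pi.single m (d m) : Fin k → ℕ))
      (Finset.mem_erase.mpr ⟨hℓ, Finset.mem_univ ℓ⟩)
  calc (Pi.single ℓ 1 : Fin k → ℕ) + (Pi.single ℓ (d ℓ - 1) +
      ((∑ m ∈ (Finset.univ.erase i).erase ℓ, (Pi.single m (d m) : Fin k → ℕ)) +
        Pi.single i (d i)))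
      = ((Pi.single ℓ 1 + Pi.single ℓ (d ℓ - 1)) +
          (∑ m ∈ (Finset.univ.erase i).erase ℓ, (Pi.single m (d m) : Fin k → ℕ))) +
          Pi.single i (d i) := by abel
    _ = d := by rw [h1, h2, sum_single_erase]

variable {r : ℕ} {S : Fin r → (i : Fin k) → Fin (n i + 1) → K} {i : Fin k}

lemma prefactor (hS0 : ∀ a ℓ, S a ℓ ≠ 0) (hr : 0 < r)
    (hconst : ∀ ℓ, ℓ ≠ i → ∀ a b : Fin r, ∃ c : K, S a ℓ = c • S b ℓ) :
    ∃ P : MvPolynomial (Idx k n) K,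
      P.IsWeightedHomogeneous (wt k n)
        (∑ ℓ ∈ Finset.univ.erase i, (Pi.single ℓ (d ℓ) : Fin k → ℕ)) ∧
      (∀ b, evalAt (S b) P ≠ 0) ∧ (∀ v : Idx k n, v.1 = i → pderiv v P = 0) := by
  classical
  set a0 : Fin r := ⟨0, hr⟩ with ha0
  have hz : ∀ ℓ : Fin k, ∃ zz : Fin (n ℓ + 1) → K, ∑ j, zz j * S a0 ℓ j = 1 :=
    fun ℓ => sep_of_ne_zero (hS0 a0 ℓ)
  choose z hz1 using hz
  refine ⟨∏ ℓ ∈ Finset.univ.erase i, (lin K n ℓ (z ℓ)) ^ (d ℓ), ?_, ?_, ?_⟩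
  · refine IsWeightedHomogeneous.prod _ _ _ fun ℓ _ => ?_
    have := isWH_pow (lin_isWH ℓ (z ℓ)) (d ℓ)
    rwa [mul_one] at this
  · intro b
    rw [map_prod]
    rw [Finset.prod_ne_zero_iff]
    intro ℓ hℓ
    obtain ⟨c, hc⟩ := hconst ℓ (Finset.mem_erase.mp hℓ).1 b a0
    have hcne : c ≠ 0 := by
      rintro rfl
      rw [zero_smul] at hc
      exact hS0 b ℓ hc
    rw [map_pow, evalAt_lin]
    have : ∑ j, z ℓ j * S b ℓ j = c := by
      rw [hc]
      rw [show ∑ j, z ℓ j * (c • S a0 ℓ) j = c * ∑ j, z ℓ j * S a0 ℓ j by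
        rw [Finset.mul_sum]; exact Finset.sum_congr rfl fun j _ => by
          simp [Pi.smul_apply, smul_eq_mul]; ring]
      rw [hz1 ℓ, mul_one]
    rw [this]
    exact pow_ne_zero _ hcne
  · rintro ⟨m, j⟩ hm
    refine pderiv_prod_zero _ _ _ fun ℓ hℓ => pderiv_pow_zero _ _ ?_
    have : m ≠ ℓ := by
      rintro rfl
      exact (Finset.mem_erase.mp hℓ).1 hm
    exact pderiv_lin_ne this _ _

end Chunk8

namespace Chunk9
open SVAux Chunk2 Chunk3 Chunk6 Chunk7 Chunk8

variable {K : Type} [Field K] {k : ℕ} {n d : Fin k → ℕ}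
variable {r : ℕ} {S : Fin r → (i : Fin k) → Fin (n i + 1) → K} {i : Fin k}

lemma cross_elem [CharZero K] (hr : 3 ≤ r)
    (hd1 : ∀ m, 1 ≤ d m) (hdi : 2 * r - 3 ≤ d i)
    (hS0 : ∀ a ℓ, S a ℓ ≠ 0)
    (hpair : ∀ a b : Fin r, a ≠ b → ∀ c : K, S a i ≠ c • S b i)
    (hspan : 3 ≤ Module.finrank K (Submodule.span K (Set.range fun a => S a i)))
    (hconst : ∀ ℓ, ℓ ≠ i → ∀ a b : Fin r, ∃ c : K, S a ℓ = c • S b ℓ)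
    (a : Fin r) (ℓ : Fin k) (hℓ : ℓ ≠ i) (w0 : Fin (n ℓ + 1) → K)
    (hw0 : ∑ j, w0 j * S a ℓ j = 0) :
    ∃ F : MvPolynomial (Idx k n) K,
      F.IsWeightedHomogeneous (wt k n) d ∧
      (∀ b v, b ≠ a → evalAt (S b) (pderiv v F) = 0) ∧
      (∀ v : Idx k n, v.1 ≠ ℓ → evalAt (S a) (pderiv v F) = 0) ∧
      (∀ j, evalAt (S a) (pderiv ⟨ℓ, j⟩ F) = w0 j) := by
  classical
  have hz : ∀ m : Fin k, ∃ zz : Fin (n m + 1) → K, ∑ j, zz j * S a m j = 1 :=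
    fun m => sep_of_ne_zero (hS0 a m)
  choose z hz1 using hz
  obtain ⟨Ga, hGaH, hGa1, hGab, hGaBlock⟩ :=
    bump (S := S) hr (fun b => hS0 b i) hpair hspan a (d i) (by omega)
  set R : MvPolynomial (Idx k n) K :=
    (lin K n ℓ (z ℓ)) ^ (d ℓ - 1) *
      (∏ m ∈ (Finset.univ.erase i).erase ℓ, (lin K n m (z m)) ^ (d m)) * Ga with hR
  have hρ : evalAt (S a) R = 1 := by
    rw [hR, map_mul, map_mul, map_pow, map_prod, evalAt_lin, hz1, one_pow, hGa1, one_mul,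
      mul_one]
    refine Finset.prod_eq_one fun m _ => ?_
    rw [map_pow, evalAt_lin, hz1, one_pow]
  have hwall : ∀ b, evalAt (S b) (lin K n ℓ w0) = 0 := by
    intro b
    obtain ⟨c, hc⟩ := hconst ℓ hℓ b a
    rw [evalAt_lin, hc]
    rw [show ∑ j, w0 j * (c • S a ℓ) j = c * ∑ j, w0 j * S a ℓ j by
      rw [Finset.mul_sum]
      exact Finset.sum_congr rfl fun j _ => by simp [smul_eq_mul]; ring]
    rw [hw0, mul_zero]
  have hRb : ∀ b, b ≠ a → evalAt (S b) R = 0 := by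
    intro b hb
    rw [hR, map_mul, (hGab b hb).1, mul_zero]
  clear_value R
  refine ⟨lin K n ℓ w0 * R, ?_, ?_, ?_, ?_⟩
  · -- homogeneity
    rw [hR]
    have hpow := isWH_pow (lin_isWH ℓ (z ℓ)) (d ℓ - 1)
    rw [mul_one] at hpow
    have hprod := IsWeightedHomogeneous.prod ((Finset.univ.erase i).erase ℓ)
      (fun m => (lin K n m (z m)) ^ (d m))
      (fun m => (Pi.single m (d m) : Fin k → ℕ))
      (fun m _ => by have := isWH_pow (lin_isWH m (z m)) (d m); rwa [mul_one] at this)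
    have hRH := (hpow.mul hprod).mul hGaH
    have hFH := (lin_isWH ℓ w0).mul hRH
    have hdeg : (Pi.single ℓ 1 : Fin k → ℕ) +
        ((Pi.single ℓ (d ℓ - 1) +
          ∑ m ∈ (Finset.univ.erase i).erase ℓ, (Pi.single m (d m) : Fin k → ℕ)) +
          Pi.single i (d i)) = d := by
      rw [add_assoc]
      exact deg_split hℓ (hd1 ℓ)
    rwa [hdeg] at hFH
  · intro b v hb
    rw [pderiv_mul, map_add, map_mul, map_mul, hwall b, hRb b hb]
    ring
  · rintro ⟨m, j⟩ hm
    rw [pderiv_mul, map_add, map_mul, map_mul, hwall a, pderiv_lin_ne hm, map_zero]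
    ring
  · intro j
    rw [pderiv_mul, map_add, map_mul, map_mul, hwall a, pderiv_lin_same, evalAt_C, hρ]
    ring

end Chunk9


set_option maxHeartbeats 1000000
set_option synthInstance.maxHeartbeats 200000
open SVAux Chunk2 Chunk3 Chunk5 Chunk6 Chunk7 Chunk8 Chunk9

/-- **Non-collinear points on a ruling are not Terracini for Segre–Veronese varieties.**
Let `r = min_i ⌈(d i + 2)/2⌉ ≥ 3` (note `⌈(d+2)/2⌉ = (d+3)/2` with integer division) and
`J = {i : ⌈(d i + 2)/2⌉ = r}`.  Let `S` be a set of `r` distinct points of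
`ℙ^{n 1} × ⋯ × ℙ^{n k}`.  If for some `i ∈ J` the `ℓ`-th components of all points of `S` are
pairwise proportional for every `ℓ ≠ i`, while the `i`-th components are *not* collinear (they
span a subspace of `K^{n i + 1}` of dimension `≥ 3`), then the double points `2S` impose
independent conditions in multidegree `d`, i.e. `ν(S) ∉ Ter_r(SV)`. -/
theorem sv_noncollinear_ruling_not_terracini
    {K : Type} [Field K] [IsAlgClosed K] [CharZero K]
    (k : ℕ) (n d : Fin k → ℕ)
    (hn : ∀ i, 1 ≤ n i) (hd : ∀ i, 1 ≤ d i)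
    (r : ℕ) (hr3 : 3 ≤ r)
    (hrle : ∀ i, r ≤ (d i + 3) / 2) (hrmem : ∃ i, (d i + 3) / 2 = r)
    (S : Fin r → (i : Fin k) → (Fin (n i + 1) → K))
    (hS0 : ∀ a i, S a i ≠ 0)
    (hSd : ∀ a b, a ≠ b → ∃ i, ∀ c : K, S a i ≠ c • S b i)
    (i : Fin k) (hi : (d i + 3) / 2 = r)
    (hconst : ∀ ℓ, ℓ ≠ i → ∀ a b : Fin r, ∃ c : K, S a ℓ = c • S b ℓ)
    (hncol : 3 ≤ Module.finrank K ↥(Submodule.span K (Set.range fun a => S a i))) :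
    Module.finrank K ↥(svDblVanish K k n d S) + r * ((∑ j, n j) + 1)
      = ∏ j, Nat.choose (n j + d j) (n j) := by

  classical
  have hk : 0 < k := i.pos
  have hd2r : ∀ j, 2 * r - 3 ≤ d j := by
    intro j
    have h := (Nat.le_div_iff_mul_le (by norm_num : 0 < 2)).mp (hrle j)
    omega
  have hpair : ∀ a b : Fin r, a ≠ b → ∀ c : K, S a i ≠ c • S b i := by
    intro a b hab c
    obtain ⟨ℓ, hℓ⟩ := hSd a b hab
    by_cases hℓi : ℓ = i
    · subst hℓi; exact hℓ c
    · obtain ⟨c', hc'⟩ := hconst ℓ hℓi a b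
      exact absurd hc' (hℓ c')
  have hdine : (d i : K) ≠ 0 := Nat.cast_ne_zero.mpr (by have := hd i; omega)
  set V := weightedHomogeneousSubmodule K (wt k n) d with hV
  set Φ : V →ₗ[K] (Fin r × Idx k n → K) :=
    LinearMap.pi (fun av : Fin r × Idx k n =>
      (evalAt (S av.1)).toLinearMap ∘ₗ (pderiv av.2).toLinearMap ∘ₗ V.subtype) with hΦ
  have hΦ_apply : ∀ (F : V) (a : Fin r) (v : Idx k n),
      Φ F (a, v) = evalAt (S a) (pderiv v (F : MvPolynomial (Idx k n) K)) := fun F a v => rfl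
  set θ : Fin r → {ℓ : Fin k // ℓ ≠ i} → ((Fin r × Idx k n → K) →ₗ[K] K) := fun a ℓ =>
    (d i : K) • (∑ j, S a ℓ.1 j •
        LinearMap.proj (R := K) (φ := fun _ : Fin r × Idx k n => K) (a, ⟨ℓ.1, j⟩))
      - (d ℓ.1 : K) • (∑ j, S a i j •
        LinearMap.proj (R := K) (φ := fun _ : Fin r × Idx k n => K) (a, ⟨i, j⟩)) with hθ
  have hθ_apply : ∀ a ℓ (g : Fin r × Idx k n → K), θ a ℓ g =
      (d i : K) * (∑ j, S a ℓ.1 j * g (a, ⟨ℓ.1, j⟩))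
        - (d ℓ.1 : K) * (∑ j, S a i j * g (a, ⟨i, j⟩)) := by
    intro a ℓ g
    simp [hθ, LinearMap.sum_apply, Finset.mul_sum, smul_eq_mul]
  set Θ : (Fin r × Idx k n → K) →ₗ[K] (Fin r × {ℓ : Fin k // ℓ ≠ i} → K) :=
    LinearMap.pi (fun p => θ p.1 p.2) with hΘ
  have hΘ_apply : ∀ (g) (p : Fin r × {ℓ : Fin k // ℓ ≠ i}), Θ g p = θ p.1 p.2 g :=
    fun g p => rfl
  have hrange_le : ∀ F : V, Θ (Φ F) = 0 := by
    intro F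
    funext p
    obtain ⟨a, ℓ⟩ := p
    rw [hΘ_apply, hθ_apply, Pi.zero_apply]
    have hFH : (F : MvPolynomial (Idx k n) K).IsWeightedHomogeneous (wt k n) d := F.2
    have h1 := euler_eval ℓ.1 hFH (S a)
    have h2 := euler_eval i hFH (S a)
    simp only [hΦ_apply]
    rw [h1, h2]
    ring
  -- surjectivity of Θ
  have hsingle : ∀ p : Fin r × {ℓ : Fin k // ℓ ≠ i}, ∃ g, Θ g =
      fun q => if p = q then (1 : K) else 0 := by
    rintro ⟨a, ℓ⟩
    obtain ⟨j0, hj0⟩ : ∃ j0, S a ℓ.1 j0 ≠ 0 := by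
      by_contra hcon
      push_neg at hcon
      exact hS0 a ℓ.1 (funext hcon)
    refine ⟨Pi.single (M := fun _ : Fin r × Idx k n => K) (a, (⟨ℓ.1, j0⟩ : Idx k n))
      (((d i : K) * S a ℓ.1 j0)⁻¹), ?_⟩
    funext ⟨a', ℓ'⟩
    rw [hΘ_apply, hθ_apply]
    have hz2 : (∑ j, S a' i j *
        Pi.single (M := fun _ : Fin r × Idx k n => K) (a, (⟨ℓ.1, j0⟩ : Idx k n))
          (((d i : K) * S a ℓ.1 j0)⁻¹) (a', ⟨i, j⟩)) = 0 := by
      refine Finset.sum_eq_zero fun j _ => ?_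
      rw [Pi.single_apply, if_neg, mul_zero]
      rintro h
      have h3 : i = ℓ.1 := congrArg Sigma.fst (Prod.mk.injEq _ _ _ _ ▸ h).2
      exact ℓ.2 h3.symm
    rw [hz2, mul_zero, sub_zero]
    by_cases ha : a' = a ∧ ℓ' = ℓ
    · obtain ⟨rfl, rfl⟩ := ha
      rw [if_pos rfl]
      rw [Finset.sum_eq_single j0 (fun j _ hj => ?_) (fun h => absurd (Finset.mem_univ _) h)]
      · rw [Pi.single_eq_same]
        field_simp
      · rw [Pi.single_apply, if_neg, mul_zero]
        rintro h
        have h2 := (Prod.mk.injEq _ _ _ _ ▸ h).2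
        refine hj ?_
        injection h2
    · rw [if_neg (fun hh => ha ⟨(Prod.mk.injEq _ _ _ _ ▸ hh).1.symm,
        ((Prod.mk.injEq _ _ _ _ ▸ hh).2).symm⟩)]
      rw [Finset.sum_eq_zero, mul_zero]
      intro j _
      rw [Pi.single_apply, if_neg, mul_zero]
      rintro h
      have h1 := (Prod.mk.injEq _ _ _ _ ▸ h).1
      have h2 := (Prod.mk.injEq _ _ _ _ ▸ h).2
      exact ha ⟨h1, Subtype.ext (congrArg Sigma.fst h2)⟩
  have hΘsurj : ∀ y : Fin r × {ℓ : Fin k // ℓ ≠ i} → K, ∃ g, Θ g = y := by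
    intro y
    choose gs hgs using hsingle
    refine ⟨∑ p, y p • gs p, ?_⟩
    rw [map_sum]
    funext q
    rw [Finset.sum_apply]
    simp only [map_smul, hgs, Pi.smul_apply, smul_eq_mul, mul_ite, mul_one, mul_zero]
    rw [Finset.sum_ite_eq']
    simp
  -- ker Θ ≤ range Φ
  have hker_le : ∀ u : Fin r × Idx k n → K, Θ u = 0 → ∃ F : V, Φ F = u := by
    intro u hu
    obtain ⟨P, hPH, hPne, hPblock⟩ := prefactor (n := n) (d := d) (i := i) hS0 (by omega) hconst
    have hGex : ∀ b : Fin r, ∃ G : MvPolynomial (Idx k n) K,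
        G.IsWeightedHomogeneous (wt k n) (Pi.single i (d i)) ∧
        (∀ b', b' ≠ b → ∀ v, evalAt (S b') (pderiv v G) = 0) ∧
        (∀ v : Idx k n, v.1 ≠ i → pderiv v G = 0) ∧
        (∀ j, evalAt (S b) (pderiv ⟨i, j⟩ G) = (evalAt (S b) P)⁻¹ * u (b, ⟨i, j⟩)) :=
      fun b => grad hr3 (hd i) (hd2r i) (fun a => hS0 a i) hpair hncol b
        (fun j => (evalAt (S b) P)⁻¹ * u (b, ⟨i, j⟩))
    choose G hGH hGb hGblock hGgrad using hGex
    set F1 : MvPolynomial (Idx k n) K := P * ∑ b, G b with hF1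
    have hF1mem : F1 ∈ V := by
      rw [hV, mem_weightedHomogeneousSubmodule]
      have hsum : (∑ b, G b) ∈ weightedHomogeneousSubmodule K (wt k n) (Pi.single i (d i)) :=
        Submodule.sum_mem _ (fun b _ => hGH b)
      have htot := hPH.mul ((mem_weightedHomogeneousSubmodule _ _ _ _).mp hsum)
      rwa [sum_single_erase] at htot
    have hΦF1 : ∀ b (j : Fin (n i + 1)), Φ ⟨F1, hF1mem⟩ (b, ⟨i, j⟩) = u (b, ⟨i, j⟩) := by
      intro b j
      rw [hΦ_apply]
      show evalAt (S b) (pderiv (⟨i, j⟩ : Idx k n) F1) = _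
      rw [hF1, pderiv_mul, hPblock ⟨i, j⟩ rfl, zero_mul, zero_add, map_mul, map_sum, map_sum]
      rw [Finset.sum_eq_single b (fun b' _ hb' => hGb b' b (Ne.symm hb') ⟨i, j⟩)
        (fun h => absurd (Finset.mem_univ _) h)]
      rw [hGgrad b j, ← mul_assoc, mul_inv_cancel₀ (hPne b), one_mul]
    set u2 : Fin r × Idx k n → K := u - Φ ⟨F1, hF1mem⟩ with hu2
    have hu2ker : Θ u2 = 0 := by
      rw [hu2, map_sub, hu, hrange_le ⟨F1, hF1mem⟩, sub_zero]
    have hu2i : ∀ b (j : Fin (n i + 1)), u2 (b, ⟨i, j⟩) = 0 := by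
      intro b j
      rw [hu2, Pi.sub_apply, hΦF1 b j, sub_self]
    have hu2c : ∀ (a : Fin r) (ℓ : Fin k) (hℓi : ℓ ≠ i),
        ∑ j, u2 (a, ⟨ℓ, j⟩) * S a ℓ j = 0 := by
      intro a ℓ hℓi
      have h := congrFun hu2ker (a, ⟨ℓ, hℓi⟩)
      rw [hΘ_apply, hθ_apply, Pi.zero_apply] at h
      have h2 : (∑ j, S a i j * u2 (a, ⟨i, j⟩)) = 0 :=
        Finset.sum_eq_zero fun j _ => by rw [hu2i a j, mul_zero]
      rw [h2, mul_zero, sub_zero] at h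
      have h3 := (mul_eq_zero.mp h).resolve_left hdine
      rw [← h3]
      exact Finset.sum_congr rfl fun j _ => mul_comm _ _
    have hcr : ∀ p : Fin r × {ℓ : Fin k // ℓ ≠ i}, ∃ F : MvPolynomial (Idx k n) K,
        F.IsWeightedHomogeneous (wt k n) d ∧
        ∀ (b : Fin r) (v : Idx k n), evalAt (S b) (pderiv v F)
          = if b = p.1 ∧ v.1 = p.2.1 then u2 (b, v) else 0 := by
      rintro ⟨a, ℓ, hℓi⟩
      obtain ⟨F, hFH, hFb, hFnl, hFl⟩ := cross_elem hr3 hd (hd2r i) hS0 hpair hncol hconst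
        a ℓ hℓi (fun j => u2 (a, ⟨ℓ, j⟩)) (hu2c a ℓ hℓi)
      refine ⟨F, hFH, ?_⟩
      intro b v
      by_cases hb : b = a
      · subst hb
        obtain ⟨m, j⟩ := v
        by_cases hm : m = ℓ
        · subst hm
          rw [if_pos ⟨rfl, rfl⟩]
          exact hFl j
        · rw [if_neg (fun hh => hm hh.2), hFnl ⟨m, j⟩ hm]
      · rw [if_neg (fun hh => hb hh.1)]
        exact hFb b v hb
    choose F2 hF2H hF2val using hcr
    have hmem2 : (∑ p, F2 p) ∈ V := by
      rw [hV]
      exact Submodule.sum_mem _ fun p _ => hF2H p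
    refine ⟨⟨F1, hF1mem⟩ + ⟨∑ p, F2 p, hmem2⟩, ?_⟩
    rw [map_add]
    funext q
    obtain ⟨b, v⟩ := q
    rw [Pi.add_apply]
    have hsum2 : Φ ⟨∑ p, F2 p, hmem2⟩ (b, v) = u2 (b, v) := by
      rw [hΦ_apply]
      show evalAt (S b) (pderiv v (∑ p, F2 p)) = u2 (b, v)
      rw [map_sum, map_sum, Finset.sum_congr rfl (fun p _ => hF2val p b v)]
      obtain ⟨m, j⟩ := v
      by_cases hm : m = i
      · subst hm
        rw [hu2i b j]
        exact Finset.sum_eq_zero fun p _ => if_neg (fun hh => p.2.2 (hh.2.symm))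
      · rw [Finset.sum_eq_single (⟨b, ⟨m, hm⟩⟩ : Fin r × {ℓ : Fin k // ℓ ≠ i}) ?_ ?_]
        · rw [if_pos ⟨rfl, rfl⟩]
        · rintro ⟨a', ℓ'⟩ - hne
          refine if_neg ?_
          rintro ⟨h1, h2⟩
          exact hne (Prod.ext h1.symm (Subtype.ext h2.symm))
        · intro habs
          exact absurd (Finset.mem_univ _) habs
    rw [hsum2, hu2, Pi.sub_apply]
    ring
  -- range Φ = ker Θ
  have hrange : LinearMap.range Φ = LinearMap.ker Θ := by
    apply le_antisymm
    · rintro g ⟨F, rfl⟩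
      exact LinearMap.mem_ker.mpr (hrange_le F)
    · intro g hg
      obtain ⟨F, hF⟩ := hker_le g (LinearMap.mem_ker.mp hg)
      exact ⟨F, hF⟩
  -- identify ker Φ with svDblVanish
  have hle : svDblVanish K k n d S ≤ V := fun x hx => hx.1
  have hkerΦ : Submodule.comap V.subtype (svDblVanish K k n d S) = LinearMap.ker Φ := by
    ext F
    simp only [Submodule.mem_comap, LinearMap.mem_ker]
    constructor
    · intro hF
      funext q
      obtain ⟨a, v⟩ := q
      rw [hΦ_apply, Pi.zero_apply]
      have h2 : (F : MvPolynomial (Idx k n) K) ∈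
          ⨅ (a : Fin r) (v : Idx k n), LinearMap.ker
            ((aeval fun w : Idx k n => S a w.1 w.2).toLinearMap ∘ₗ (pderiv v).toLinearMap) :=
        hF.2
      exact LinearMap.mem_ker.mp ((Submodule.mem_iInf _).mp
        ((Submodule.mem_iInf _).mp h2 a) v)
    · intro hF
      refine ⟨F.2, ?_⟩
      show (F : MvPolynomial (Idx k n) K) ∈
          ⨅ (a : Fin r) (v : Idx k n), LinearMap.ker
            ((aeval fun w : Idx k n => S a w.1 w.2).toLinearMap ∘ₗ (pderiv v).toLinearMap)
      rw [Submodule.mem_iInf]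
      intro a
      rw [Submodule.mem_iInf]
      intro v
      rw [LinearMap.mem_ker]
      show evalAt (S a) (pderiv v (F : MvPolynomial (Idx k n) K)) = 0
      rw [← hΦ_apply F a v, hF, Pi.zero_apply]
  have hfr1 : Module.finrank K (svDblVanish K k n d S) = Module.finrank K (LinearMap.ker Φ) := by
    rw [← hkerΦ]
    exact (Submodule.comapSubtypeEquivOfLe hle).finrank_eq.symm
  -- dimension bookkeeping
  have hrn1 := LinearMap.finrank_range_add_finrank_ker Φ
  have hrn2 := LinearMap.finrank_range_add_finrank_ker Θ
  have hdomΘ : Module.finrank K (Fin r × Idx k n → K) = r * ((∑ j, n j) + k) := by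
    rw [Module.finrank_fintype_fun_eq_card, Fintype.card_prod, Fintype.card_fin,
      Fintype.card_sigma]
    congr 1
    simp [Finset.sum_add_distrib, Finset.card_univ]
  have hcard2 : Fintype.card {ℓ : Fin k // ℓ ≠ i} = k - 1 := by
    show Fintype.card {ℓ : Fin k // ¬ (ℓ = i)} = k - 1
    rw [Fintype.card_subtype_compl, Fintype.card_subtype_eq, Fintype.card_fin]
  have hranΘ : Module.finrank K (LinearMap.range Θ) = r * (k - 1) := by
    have htop : LinearMap.range Θ = ⊤ := by
      rw [LinearMap.range_eq_top]
      intro y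
      obtain ⟨g, hg⟩ := hΘsurj y
      exact ⟨g, hg⟩
    rw [htop, finrank_top, Module.finrank_fintype_fun_eq_card, Fintype.card_prod,
      Fintype.card_fin, hcard2]
  have hkerΘfr : Module.finrank K (LinearMap.ker Θ) = r * ((∑ j, n j) + 1) := by
    have hsplit : r * ((∑ j, n j) + k) = r * ((∑ j, n j) + 1) + r * (k - 1) := by
      obtain ⟨k', rfl⟩ : ∃ k', k = k' + 1 := ⟨k - 1, by omega⟩
      rw [Nat.add_sub_cancel]
      ring
    rw [hdomΘ, hsplit, hranΘ] at hrn2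
    omega
  have hVfr : Module.finrank K V = ∏ j, (n j + d j).choose (n j) := finrank_V d
  have hranΦ : Module.finrank K (LinearMap.range Φ) = r * ((∑ j, n j) + 1) := by
    rw [hrange, hkerΘfr]
  rw [hfr1, ← hVfr, ← hrn1, ← hranΦ]
  exact Nat.add_comm _ _
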